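/- Let φ : ℝᵐ → ℝ, p ∈ ℝᵐ, let M be a symmetric positive definite m×m matrix, γ ≥ 1, and g, d ∈ ℝᵐ with g ≠ 0. Assume: (i) φ(p + q) − φ(p) − qᵀg ≤ (γ/2) qᵀMq for all q ∈ ℝᵐ; (ii) dᵀg = dᵀMd = ϑ² gᵀM⁻¹g for some ϑ with 0 < ϑ ≤ 1; (iii) α = 2^{−l} for some natural number l, the Armijo criterion φ(p − αd) ≤ φ(p) − (α/2) dᵀg holds at α, and either l = 0 or the Armijo criterion fails at steplength 2α = 2^{−(l−1)}. Then φ(p − αd) ≤ φ(p) − (ϑ²/(4γ)) gᵀM⁻¹g. -/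

import Mathlib

open Matrix

/-- Per-iteration decrease of the objective in the inexact Newton method with
backtracking Armijo line search: `φ(p − αd) ≤ φ(p) − (ϑ²/(4γ)) gᵀM⁻¹g`. -/
theorem newton_step_decrease {m : ℕ} (φ : (Fin m → ℝ) → ℝ)
    (p g d : Fin m → ℝ) (hgne : g ≠ 0)
    (M : Matrix (Fin m) (Fin m) ℝ) (hMs : M.IsSymm) (hMpd : M.PosDef)
    (γ : ℝ) (hγ : 1 ≤ γ) (ϑ : ℝ) (hϑ0 : 0 < ϑ) (hϑ1 : ϑ ≤ 1)
    (hquad : ∀ q : Fin m → ℝ, φ (p + q) - φ p - q ⬝ᵥ g ≤ (γ/2) * (q ⬝ᵥ M *ᵥ q))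
    (hd1 : d ⬝ᵥ g = d ⬝ᵥ M *ᵥ d)
    (hd2 : d ⬝ᵥ M *ᵥ d = ϑ^2 * (g ⬝ᵥ M⁻¹ *ᵥ g))
    (l : ℕ) (α : ℝ) (hα : α = (1/2 : ℝ)^l)
    (harmijo : φ (p - α • d) ≤ φ p - (α/2) * (d ⬝ᵥ g))
    (hprev : l = 0 ∨ φ (p - (2 * α) • d) > φ p - α * (d ⬝ᵥ g)) :
    φ (p - α • d) ≤ φ p - (ϑ^2 / (4 * γ)) * (g ⬝ᵥ M⁻¹ *ᵥ g) := by
  have hγ0 : (0:ℝ) < γ := lt_of_lt_of_le one_pos hγ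
  have hG : 0 < g ⬝ᵥ M⁻¹ *ᵥ g := by
    have := (hMpd.inv).dotProduct_mulVec_pos hgne
    simpa using this
  have hα0 : 0 < α := by rw [hα]; positivity
  have hD : d ⬝ᵥ g = ϑ^2 * (g ⬝ᵥ M⁻¹ *ᵥ g) := hd1.trans hd2
  have hDpos : 0 < d ⬝ᵥ g := by rw [hD]; positivity
  have hbound : 1 ≤ 2 * γ * α := by
    rcases hprev with h0 | hfail
    · rw [h0] at hα
      simp at hα
      nlinarith
    · have hq := hquad (-(2 * α) • d)
      have hdot : (-(2 * α) • d) ⬝ᵥ M *ᵥ (-(2 * α) • d)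
          = (2*α)^2 * (d ⬝ᵥ M *ᵥ d) := by
        rw [smul_dotProduct, mulVec_smul, dotProduct_smul, smul_eq_mul, smul_eq_mul]
        ring
      have hdg : (-(2 * α) • d) ⬝ᵥ g = -(2*α) * (d ⬝ᵥ g) := by
        rw [smul_dotProduct, smul_eq_mul]
      have heq : p + (-(2 * α) • d) = p - (2 * α) • d := by
        rw [sub_eq_add_neg, neg_smul]
      rw [heq, hdot, hdg] at hq
      rw [← hd1] at *
      nlinarith [mul_pos hα0 hDpos, sq_nonneg α]
  calc φ (p - α • d) ≤ φ p - (α/2) * (d ⬝ᵥ g) := harmijo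
    _ ≤ φ p - (ϑ^2 / (4 * γ)) * (g ⬝ᵥ M⁻¹ *ᵥ g) := by
        rw [hD]
        have : (ϑ^2 / (4 * γ)) * (g ⬝ᵥ M⁻¹ *ᵥ g) ≤ (α/2) * (ϑ^2 * (g ⬝ᵥ M⁻¹ *ᵥ g)) := by
          rw [div_mul_eq_mul_div, div_le_iff₀ (by positivity)]
          nlinarith [mul_pos (mul_pos hϑ0 hϑ0) hG]
        linarith
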